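/- arXiv:2209.05439 — 4 statements merged into one kernel-verified Lean document; each statement's English description precedes it below -/
import Mathlib

section
/- Let g : (0,1) → ℂ extend to a continuously differentiable bounded function on (0,∞) such that the limit lim_{N→∞} ∫₁^N g(t)/t dt exists and g(0) := lim_{t→0⁺} g(t) exists. Then for every a > 0, the double limit as ε → 0⁺ and N → ∞ of ∫_ε^N (g(ra) − g(r))/r dr equals g(0)·ln(1/a). -/
open Filter Set intervalIntegral Topology
open scoped Interval

/-- Frullani-type identity: if `g : (0,∞) → ℂ` is continuously differentiable and
bounded, `∫₁^N g(t)/t dt` converges as `N → ∞`, and `g` has a limit `g₀` at `0⁺`, then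
for each `a > 0`,
`lim_{ε→0⁺, N→∞} ∫_ε^N (g(ra) − g(r))/r dr = g₀ · ln(1/a)`. -/
theorem frullani_limit (g g' : ℝ → ℂ) (C : ℝ)
    (hderiv : ∀ t ∈ Ioi (0 : ℝ), HasDerivAt g (g' t) t)
    (hcont : ContinuousOn g' (Ioi 0))
    (hbdd : ∀ t ∈ Ioi (0 : ℝ), ‖g t‖ ≤ C)
    (L : ℂ) (hL : Tendsto (fun N : ℝ => ∫ t in (1 : ℝ)..N, g t / t) atTop (𝓝 L))
    (g₀ : ℂ) (hg₀ : Tendsto g (nhdsWithin 0 (Ioi 0)) (𝓝 g₀))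
    (a : ℝ) (ha : 0 < a) :
    Tendsto (fun p : ℝ × ℝ => ∫ r in p.1..p.2, (g (r * a) - g r) / r)
      ((nhdsWithin 0 (Ioi 0)) ×ˢ atTop)
      (𝓝 (g₀ * (Real.log (1 / a) : ℂ))) := by
  have hcg : ContinuousOn g (Ioi 0) := fun t ht =>
    (hderiv t ht).continuousAt.continuousWithinAt
  set f : ℝ → ℂ := fun t => g t / (t : ℂ) with hf
  have hsub : ∀ {x y : ℝ}, 0 < x → 0 < y → [[x, y]] ⊆ Ioi (0 : ℝ) := by
    intro x y hx hy t ht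
    exact lt_of_lt_of_le (lt_min hx hy) ht.1
  have hfc : ContinuousOn f (Ioi 0) := by
    apply hcg.div Complex.continuous_ofReal.continuousOn
    intro t ht
    exact_mod_cast (ne_of_gt (show (0:ℝ) < t from ht))
  have hint : ∀ x y : ℝ, 0 < x → 0 < y →
      IntervalIntegrable f MeasureTheory.volume x y := fun x y hx hy =>
    (hfc.mono (hsub hx hy)).intervalIntegrable
  -- tail term tends to 0
  have hNa : Tendsto (fun N : ℝ => N * a) atTop atTop :=
    Tendsto.atTop_mul_const ha tendsto_id
  have h2 : Tendsto (fun N : ℝ => ∫ t in N..(N * a), f t) atTop (𝓝 0) := by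
    have h2' : Tendsto (fun N : ℝ =>
        (∫ t in (1:ℝ)..(N * a), f t) - ∫ t in (1:ℝ)..N, f t) atTop (𝓝 (L - L)) :=
      (hL.comp hNa).sub hL
    rw [sub_self] at h2'
    apply h2'.congr'
    filter_upwards [eventually_gt_atTop (0:ℝ)] with N hN
    exact integral_interval_sub_left (hint 1 (N * a) one_pos (mul_pos hN ha))
      (hint 1 N one_pos hN)
  -- head term tends to g₀ * log (1/a)
  have h1 : Tendsto (fun ε : ℝ => ∫ t in (ε * a)..ε, f t) (𝓝[>] (0:ℝ))
      (𝓝 (g₀ * (Real.log (1 / a) : ℂ))) := by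
    rw [Metric.tendsto_nhdsWithin_nhds]
    intro δ hδ
    set δ₁ := δ / (|Real.log a| + 1) with hδ₁def
    have hδ₁ : 0 < δ₁ := div_pos hδ (by positivity)
    rw [Metric.tendsto_nhdsWithin_nhds] at hg₀
    obtain ⟨η₀, hη₀, hg⟩ := hg₀ δ₁ hδ₁
    have hmax : (0:ℝ) < max a 1 := lt_of_lt_of_le one_pos (le_max_right a 1)
    refine ⟨η₀ / max a 1, by positivity, ?_⟩
    intro ε hε hεd
    have hε0 : 0 < ε := hε
    have hεa : 0 < ε * a := mul_pos hε0 ha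
    have hεne : ε ≠ 0 := hε0.ne'
    have h0not : (0:ℝ) ∉ [[ε * a, ε]] := fun h => lt_irrefl (0:ℝ) (hsub hεa hε0 h)
    have hεlt : ε < η₀ / max a 1 := by
      rw [Real.dist_eq, sub_zero, abs_of_pos hε0] at hεd
      exact hεd
    have hsmall : ∀ t ∈ [[ε * a, ε]], dist (g t) g₀ < δ₁ := by
      intro t ht
      have ht0 : 0 < t := hsub hεa hε0 ht
      apply hg ht0
      rw [Real.dist_eq, sub_zero, abs_of_pos ht0]
      have h1' : t ≤ max (ε * a) ε := ht.2
      have h2' : max (ε * a) ε ≤ ε * max a 1 := by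
        rw [mul_max_of_nonneg _ _ hε0.le, mul_one]
      have h3' : ε * max a 1 < η₀ := by
        rw [← lt_div_iff₀ hmax]
        exact hεlt
      exact lt_of_le_of_lt (le_trans h1' h2') h3'
    -- the constant integral
    have hintc : IntervalIntegrable (fun t : ℝ => g₀ / (t : ℂ))
        MeasureTheory.volume (ε * a) ε := by
      apply ContinuousOn.intervalIntegrable
      apply (continuousOn_const.div Complex.continuous_ofReal.continuousOn ?_).mono
        (hsub hεa hε0)
      intro t ht
      exact_mod_cast (ne_of_gt (show (0:ℝ) < t from ht))
    have hintd : IntervalIntegrable (fun t : ℝ => δ₁ / t)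
        MeasureTheory.volume (ε * a) ε := by
      apply ContinuousOn.intervalIntegrable
      apply (continuousOn_const.div continuousOn_id ?_).mono (hsub hεa hε0)
      intro t ht
      exact (ne_of_gt (show (0:ℝ) < t from ht))
    have hconst : (∫ t in (ε * a)..ε, g₀ / (t : ℂ)) = g₀ * (Real.log (1 / a) : ℂ) := by
      have heq : ∀ t : ℝ, g₀ / (t : ℂ) = g₀ * ((1 / t : ℝ) : ℂ) := by
        intro t; push_cast; ring
      simp_rw [heq]
      rw [intervalIntegral.integral_const_mul, intervalIntegral.integral_ofReal,
        integral_one_div h0not]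
      congr 2
      rw [div_mul_eq_div_div, div_self hεne]
    rw [dist_eq_norm, ← hconst, ← intervalIntegral.integral_sub (hint _ _ hεa hε0) hintc]
    have hb : ∀ᵐ t ∂(MeasureTheory.volume.restrict (Ι (ε * a) ε)),
        ‖f t - g₀ / (t : ℂ)‖ ≤ δ₁ / t := by
      filter_upwards [MeasureTheory.ae_restrict_mem measurableSet_uIoc] with t ht
      have ht' : t ∈ [[ε * a, ε]] := Ioc_subset_Icc_self ht
      have ht0 : 0 < t := hsub hεa hε0 ht'
      have heq : f t - g₀ / (t : ℂ) = (g t - g₀) / (t : ℂ) := by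
        rw [sub_div]
      rw [heq, norm_div]
      have hnt : ‖(t : ℂ)‖ = t := by
        rw [Complex.norm_real, Real.norm_eq_abs, abs_of_pos ht0]
      rw [hnt]
      have hle := (hsmall t ht').le
      rw [dist_eq_norm] at hle
      gcongr
    calc ‖∫ t in (ε * a)..ε, (f t - g₀ / (t : ℂ))‖
        ≤ |∫ t in (ε * a)..ε, δ₁ / t| :=
          intervalIntegral.norm_integral_le_abs_of_norm_le hb hintd
      _ = δ₁ * |Real.log a| := by
          have : (∫ t in (ε * a)..ε, δ₁ / t) = δ₁ * Real.log (1 / a) := by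
            simp_rw [div_eq_mul_inv]
            rw [intervalIntegral.integral_const_mul, integral_inv h0not,
              div_mul_eq_div_div, div_self hεne, one_mul, one_div]
          rw [this, abs_mul, abs_of_pos hδ₁, one_div, Real.log_inv, abs_neg]
      _ < δ₁ * (|Real.log a| + 1) := by
          apply mul_lt_mul_of_pos_left (lt_add_one _) hδ₁
      _ = δ := by
          rw [hδ₁def, div_mul_cancel₀]
          positivity
  -- eventual identity
  have key : ∀ᶠ p : ℝ × ℝ in (𝓝[>] (0:ℝ)) ×ˢ atTop,
      (∫ r in p.1..p.2, (g (r * a) - g r) / (r : ℂ)) =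
        (∫ t in (p.1 * a)..p.1, f t) + ∫ t in p.2..(p.2 * a), f t := by
    filter_upwards [Filter.prod_mem_prod self_mem_nhdsWithin (Ioi_mem_atTop (0:ℝ))]
      with p hp
    obtain ⟨hε, hN⟩ := hp
    set ε := p.1
    set N := p.2
    have hε0 : (0:ℝ) < ε := hε
    have hN0 : (0:ℝ) < N := hN
    have hεa : 0 < ε * a := mul_pos hε0 ha
    have hNa' : 0 < N * a := mul_pos hN0 ha
    have ig1 : IntervalIntegrable (fun r : ℝ => g (r * a) / (r : ℂ))
        MeasureTheory.volume ε N := by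
      apply ContinuousOn.intervalIntegrable
      apply ContinuousOn.div
      · apply hcg.comp (continuous_id.mul continuous_const).continuousOn
        intro r hr
        exact mul_pos (hsub hε0 hN0 hr) ha
      · exact Complex.continuous_ofReal.continuousOn
      · intro t ht
        exact_mod_cast (ne_of_gt (hsub hε0 hN0 ht))
    have step1 : (∫ r in ε..N, (g (r * a) - g r) / (r : ℂ)) =
        (∫ r in ε..N, g (r * a) / (r : ℂ)) - ∫ r in ε..N, f r := by
      rw [← intervalIntegral.integral_sub ig1 (hint ε N hε0 hN0)]
      apply intervalIntegral.integral_congr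
      intro r _
      show (g (r * a) - g r) / (r : ℂ) = g (r * a) / (r : ℂ) - g r / (r : ℂ)
      rw [sub_div]
    have step2 : (∫ r in ε..N, g (r * a) / (r : ℂ)) = ∫ t in (ε * a)..(N * a), f t := by
      have heq : (∫ r in ε..N, g (r * a) / (r : ℂ)) = ∫ r in ε..N, a • f (r * a) := by
        apply intervalIntegral.integral_congr
        intro r hr
        have hr0 : 0 < r := hsub hε0 hN0 hr
        have hrC : (r : ℂ) ≠ 0 := by exact_mod_cast hr0.ne'
        have haC : (a : ℂ) ≠ 0 := by exact_mod_cast ha.ne'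
        show g (r * a) / (r : ℂ) = a • (g (r * a) / ((r * a : ℝ) : ℂ))
        rw [Complex.real_smul]
        push_cast
        field_simp
      rw [heq, intervalIntegral.integral_smul, integral_comp_mul_right f ha.ne',
        smul_smul, mul_inv_cancel₀ ha.ne', one_smul]
    have step3 : (∫ t in (ε * a)..(N * a), f t) =
        ((∫ t in (ε * a)..ε, f t) + ∫ t in ε..N, f t) + ∫ t in N..(N * a), f t := by
      rw [integral_add_adjacent_intervals (hint _ _ hεa hε0) (hint _ _ hε0 hN0),
        integral_add_adjacent_intervals (hint _ _ hεa hN0) (hint _ _ hN0 hNa')]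
    rw [step1, step2, step3]
    ring
  have hsum : Tendsto (fun p : ℝ × ℝ =>
      (∫ t in (p.1 * a)..p.1, f t) + ∫ t in p.2..(p.2 * a), f t)
      ((𝓝[>] (0:ℝ)) ×ˢ atTop) (𝓝 (g₀ * (Real.log (1 / a) : ℂ) + 0)) :=
    (h1.comp tendsto_fst).add (h2.comp tendsto_snd)
  rw [add_zero] at hsum
  exact hsum.congr' (Filter.EventuallyEq.symm key)
end

section
/- Let g : (0,∞) → ℂ be continuously differentiable and bounded with ‖g‖_∞ := sup |g|. Then for all a > 0 and all 0 < ε < N < ∞, one has |∫_ε^N (g(ra) − g(r))/r dr| ≤ 2‖g‖_∞ · |ln a|. -/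
open Filter Set intervalIntegral Topology

lemma frullani_int (g : ℝ → ℂ)
    (hg : ContinuousOn g (Ioi 0)) {b c : ℝ} (hb : 0 < b) (hc : 0 < c) :
    IntervalIntegrable (fun u => g u / u) MeasureTheory.volume b c := by
  have hsub' : uIcc b c ⊆ Ioi 0 := fun x hx => lt_of_lt_of_le (lt_min hb hc) hx.1
  apply ContinuousOn.intervalIntegrable
  exact (hg.mono hsub').div (Complex.continuous_ofReal.continuousOn)
    (fun u hu => by exact_mod_cast ne_of_gt (hsub' hu))

lemma frullani_aux (g : ℝ → ℂ) (C : ℝ)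
    (hg : ContinuousOn g (Ioi 0)) (hbdd : ∀ t ∈ Ioi (0 : ℝ), ‖g t‖ ≤ C)
    {b c : ℝ} (hb : 0 < b) (hc : 0 < c) (hbc : b ≤ c) :
    ‖∫ u in b..c, g u / u‖ ≤ C * (Real.log c - Real.log b) := by
  have hsub : Icc b c ⊆ Ioi 0 := fun x hx => lt_of_lt_of_le hb hx.1
  have hsub' : uIcc b c ⊆ Ioi 0 := by rwa [uIcc_of_le hbc]
  have hint := frullani_int g hg hb hc
  have hint2 : IntervalIntegrable (fun u => C / u) MeasureTheory.volume b c := by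
    apply ContinuousOn.intervalIntegrable
    exact (continuousOn_const.div continuousOn_id (fun u hu => ne_of_gt (hsub' hu)))
  calc ‖∫ u in b..c, g u / u‖ ≤ ∫ u in b..c, ‖g u / (u:ℂ)‖ :=
        intervalIntegral.norm_integral_le_integral_norm hbc
    _ ≤ ∫ u in b..c, C / u := by
        apply intervalIntegral.integral_mono_on hbc hint.norm hint2
        intro u hu
        have hu0 : 0 < u := hsub hu
        rw [norm_div, Complex.norm_real, Real.norm_eq_abs, abs_of_pos hu0]
        gcongr
        exact hbdd u (hsub hu)
    _ = C * (Real.log c - Real.log b) := by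
        have h1 : ∫ u in b..c, C / u = C * ∫ u in b..c, 1 / u := by
          rw [← intervalIntegral.integral_const_mul]
          congr 1; ext u; ring
        rw [h1, integral_one_div_of_pos hb hc, Real.log_div (ne_of_gt hc) (ne_of_gt hb)]

lemma frullani_aux' (g : ℝ → ℂ) (C : ℝ)
    (hg : ContinuousOn g (Ioi 0)) (hbdd : ∀ t ∈ Ioi (0 : ℝ), ‖g t‖ ≤ C)
    {b c : ℝ} (hb : 0 < b) (hc : 0 < c) :
    ‖∫ u in b..c, g u / u‖ ≤ C * |Real.log c - Real.log b| := by
  rcases le_total b c with h | h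
  · rw [abs_of_nonneg (sub_nonneg.mpr (Real.log_le_log hb h))]
    exact frullani_aux g C hg hbdd hb hc h
  · rw [intervalIntegral.integral_symm, norm_neg,
      abs_of_nonpos (sub_nonpos.mpr (Real.log_le_log hc h)), neg_sub]
    exact frullani_aux g C hg hbdd hc hb h

/-- If `g : (0,∞) → ℂ` is continuously differentiable and bounded with `‖g‖_∞ ≤ C`,
then for all `a > 0` and `0 < ε < N < ∞`,
`|∫_ε^N (g(ra) − g(r))/r dr| ≤ 2‖g‖_∞ |ln a|`. -/
theorem frullani_bound (g g' : ℝ → ℂ) (C : ℝ)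
    (hderiv : ∀ t ∈ Ioi (0 : ℝ), HasDerivAt g (g' t) t)
    (hcont : ContinuousOn g' (Ioi 0))
    (hbdd : ∀ t ∈ Ioi (0 : ℝ), ‖g t‖ ≤ C)
    (a : ℝ) (ha : 0 < a) (ε N : ℝ) (hε : 0 < ε) (hεN : ε < N) :
    ‖∫ r in ε..N, (g (r * a) - g r) / r‖ ≤ 2 * C * |Real.log a| := by
  have hN : 0 < N := hε.trans hεN
  have hg : ContinuousOn g (Ioi 0) := fun t ht => ((hderiv t ht).continuousAt).continuousWithinAt
  have hC : 0 ≤ C := le_trans (norm_nonneg _) (hbdd 1 (by simp : (1:ℝ) ∈ Ioi 0))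
  have hsub : uIcc ε N ⊆ Ioi 0 := fun x hx => lt_of_lt_of_le (lt_min hε hN) hx.1
  -- integrability of both pieces on [ε,N]
  have hint1 : IntervalIntegrable (fun r => g (r * a) / r) MeasureTheory.volume ε N := by
    apply ContinuousOn.intervalIntegrable
    refine ContinuousOn.div ?_ (Complex.continuous_ofReal.continuousOn)
      (fun u hu => by exact_mod_cast ne_of_gt (hsub hu))
    exact hg.comp (continuous_id.mul continuous_const).continuousOn
      (fun u hu => mul_pos (hsub hu) ha)
  have hint2 : IntervalIntegrable (fun r => g r / r) MeasureTheory.volume ε N :=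
    frullani_int g hg hε hN
  -- split the integral
  have hsplit : ∫ r in ε..N, (g (r * a) - g r) / r
      = (∫ r in ε..N, g (r * a) / r) - ∫ r in ε..N, g r / r := by
    rw [← intervalIntegral.integral_sub hint1 hint2]
    apply intervalIntegral.integral_congr
    intro r hr
    simp [sub_div]
  -- change of variables
  have hsubst : (∫ r in ε..N, g (r * a) / r) = ∫ u in ε * a..N * a, g u / u := by
    have h1 : (∫ r in ε..N, g (r * a) / r)
        = ∫ r in ε..N, a • ((fun u => g u / u) (r * a)) := by
      apply intervalIntegral.integral_congr
      intro r hr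
      have hr0 : (r : ℂ) ≠ 0 := by exact_mod_cast ne_of_gt (hsub hr)
      have ha0 : (a : ℂ) ≠ 0 := by exact_mod_cast ne_of_gt ha
      simp only [Complex.real_smul, Complex.ofReal_mul]
      field_simp
    rw [h1, intervalIntegral.integral_smul,
      intervalIntegral.integral_comp_mul_right (fun u => g u / u) (ne_of_gt ha),
      smul_smul, mul_inv_cancel₀ (ne_of_gt ha), one_smul]
  -- combine: difference equals two boundary integrals
  have hεa : 0 < ε * a := mul_pos hε ha
  have hNa : 0 < N * a := mul_pos hN ha
  have hadd1 : (∫ u in ε * a..ε, g u / u) + (∫ u in ε..N * a, g u / u)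
      = ∫ u in ε * a..N * a, g u / u :=
    intervalIntegral.integral_add_adjacent_intervals (frullani_int g hg hεa hε)
      (frullani_int g hg hε hNa)
  have hadd2 : (∫ u in ε..N, g u / u) + (∫ u in N..N * a, g u / u)
      = ∫ u in ε..N * a, g u / u :=
    intervalIntegral.integral_add_adjacent_intervals (frullani_int g hg hε hN)
      (frullani_int g hg hN hNa)
  have hkey : ∫ r in ε..N, (g (r * a) - g r) / r
      = (∫ u in ε * a..ε, g u / u) + ∫ u in N..N * a, g u / u := by
    rw [hsplit, hsubst, ← hadd1, ← hadd2]; ring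
  rw [hkey]
  have hb1 : ‖∫ u in ε * a..ε, g u / u‖ ≤ C * |Real.log a| := by
    have := frullani_aux' g C hg hbdd hεa hε
    rwa [Real.log_mul (ne_of_gt hε) (ne_of_gt ha), sub_add_cancel_left, abs_neg] at this
  have hb2 : ‖∫ u in N..N * a, g u / u‖ ≤ C * |Real.log a| := by
    have := frullani_aux' g C hg hbdd hN hNa
    rwa [Real.log_mul (ne_of_gt hN) (ne_of_gt ha), add_sub_cancel_left] at this
  calc ‖(∫ u in ε * a..ε, g u / u) + ∫ u in N..N * a, g u / u‖
      ≤ ‖∫ u in ε * a..ε, g u / u‖ + ‖∫ u in N..N * a, g u / u‖ := norm_add_le _ _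
    _ ≤ C * |Real.log a| + C * |Real.log a| := add_le_add hb1 hb2
    _ = 2 * C * |Real.log a| := by ring
end

section
/- Let g : [0,∞) → ℝ be continuous with g(0) = max_{t ≥ 0} g(t), and suppose that ∫₀^N (g(0) − g(t))/t dt exists (is finite) for all N > 0. Then for all N > 0: if a ∈ [0,1] then ∫₀^N (g(ra) − g(r))/r dr ≥ 0, and if a ∈ [1,∞) then ∫₀^N (g(ra) − g(r))/r dr ≤ 0. -/
open Filter Set intervalIntegral Topology

lemma frullani_key (g : ℝ → ℝ) (hcont : ContinuousOn g (Ici 0))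
    (hmax : ∀ t ∈ Ici (0 : ℝ), g t ≤ g 0)
    (N : ℝ) (hN : 0 < N) (a : ℝ) (ha : 0 < a)
    (hf : IntervalIntegrable (fun r => (g (r * a) - g r) / r) MeasureTheory.volume 0 N) :
    (∫ r in (0 : ℝ)..N, (g (r * a) - g r) / r) = ∫ t in (N * a)..N, (g 0 - g t) / t := by
  set F : ℝ → ℝ := fun t => (g 0 - g t) / t with hF
  have hFc : ContinuousOn F (Ioi 0) :=
    (continuousOn_const.sub (hcont.mono Ioi_subset_Ici_self)).div continuousOn_id
      fun t ht => ne_of_gt ht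
  have hFi : ∀ c d : ℝ, 0 < c → 0 < d → IntervalIntegrable F MeasureTheory.volume c d := by
    intro c d hc hd
    exact (hFc.mono (fun x hx => (lt_min hc hd).trans_le hx.1)).intervalIntegrable
  set l : Filter ℝ := 𝓝[Ioo (0 : ℝ) N] 0 with hl
  have hlne : l.NeBot := by
    rw [hl, ← mem_closure_iff_nhdsWithin_neBot, closure_Ioo hN.ne]
    exact left_mem_Icc.mpr hN.le
  have hB : ∀ ε ∈ Ioo (0 : ℝ) N,
      (∫ r in ε..N, (g (r * a) - g r) / r)
        = (∫ t in (N * a)..N, F t) - ∫ t in (ε * a)..ε, F t := by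
    intro ε hε
    have hε0 : 0 < ε := hε.1
    have heq : EqOn (fun r => (g (r * a) - g r) / r)
        (fun r => F r - a * F (r * a)) (uIcc ε N) := by
      intro r hr
      have hr0 : 0 < r := (lt_min hε0 hN).trans_le hr.1
      simp only [hF]
      field_simp
      ring
    have hint2 : IntervalIntegrable (fun r => F (r * a)) MeasureTheory.volume ε N := by
      have h := (hFi (ε * a) (N * a) (by positivity) (by positivity)).comp_mul_right (c := a) enorm_ne_top enorm_ne_top
      simpa [ha.ne', mul_div_cancel_right₀] using h
    rw [intervalIntegral.integral_congr heq,
      intervalIntegral.integral_sub (hFi ε N hε0 hN) (hint2.const_mul a),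
      intervalIntegral.integral_const_mul,
      intervalIntegral.integral_comp_mul_right F ha.ne', smul_eq_mul, ← mul_assoc,
      mul_inv_cancel₀ ha.ne', one_mul]
    have h1 : (∫ t in (ε * a)..ε, F t) + ∫ t in ε..N, F t = ∫ t in (ε * a)..N, F t :=
      intervalIntegral.integral_add_adjacent_intervals
        (hFi _ _ (by positivity) hε0) (hFi _ _ hε0 hN)
    have h2 : (∫ t in (ε * a)..N, F t) + ∫ t in N..(N * a), F t = ∫ t in (ε * a)..(N * a), F t :=
      intervalIntegral.integral_add_adjacent_intervals
        (hFi _ _ (by positivity) hN) (hFi _ _ hN (by positivity))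
    have h3 : (∫ t in N..(N * a), F t) = -∫ t in (N * a)..N, F t :=
      intervalIntegral.integral_symm _ _
    linarith
  have hC : Tendsto (fun ε => ∫ t in (ε * a)..ε, F t) l (𝓝 0) := by
    rw [hl, Metric.tendsto_nhdsWithin_nhds]
    intro η hη
    set η' : ℝ := η / (|Real.log a| + 1) with hη'def
    have hla : (0 : ℝ) < |Real.log a| + 1 := by positivity
    have hη' : 0 < η' := by positivity
    have hηeq : η' * (|Real.log a| + 1) = η := by
      rw [hη'def]; field_simp
    obtain ⟨δ, hδ0, hδ⟩ := Metric.continuousWithinAt_iff.mp (hcont 0 self_mem_Ici) η' hη'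
    refine ⟨δ / (1 + a), by positivity, ?_⟩
    intro ε hεmem hεd
    have hε0 : 0 < ε := hεmem.1
    rw [Real.dist_eq, sub_zero, abs_of_pos hε0] at hεd
    have hwin : ∀ t : ℝ, 0 < t → t ≤ ε * (1 + a) → 0 ≤ g 0 - g t ∧ g 0 - g t < η' := by
      intro t ht0 htle
      have htδ : dist t 0 < δ := by
        rw [Real.dist_eq, sub_zero, abs_of_pos ht0]
        calc t ≤ ε * (1 + a) := htle
          _ < (δ / (1 + a)) * (1 + a) := mul_lt_mul_of_pos_right hεd (by positivity)
          _ = δ := by field_simp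
      have hd := hδ (mem_Ici.mpr ht0.le) htδ
      rw [Real.dist_eq] at hd
      refine ⟨sub_nonneg.mpr (hmax t ht0.le), ?_⟩
      calc g 0 - g t ≤ |g t - g 0| := by rw [abs_sub_comm]; exact le_abs_self _
        _ < η' := hd
    rw [Real.dist_eq, sub_zero]
    have key : ∀ c d : ℝ, 0 < c → c ≤ d → d ≤ ε * (1 + a) →
        0 ≤ (∫ t in c..d, F t) ∧ (∫ t in c..d, F t) ≤ η' * Real.log (d / c) := by
      intro c d hc hcd hdle
      have hd : 0 < d := hc.trans_le hcd
      constructor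
      · apply intervalIntegral.integral_nonneg hcd
        intro u hu
        have hu0 : 0 < u := hc.trans_le hu.1
        exact div_nonneg (hwin u hu0 (hu.2.trans hdle)).1 hu0.le
      · have hint1div : IntervalIntegrable (fun t : ℝ => η' * (1 / t))
            MeasureTheory.volume c d :=
          (intervalIntegrable_one_div
            (fun x hx => ne_of_gt ((lt_min hc hd).trans_le hx.1))
            continuousOn_id).const_mul η'
        have hmono : (∫ t in c..d, F t) ≤ ∫ t in c..d, η' * (1 / t) := by
          apply intervalIntegral.integral_mono_on hcd (hFi c d hc hd) hint1div
          intro u hu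
          have hu0 : 0 < u := hc.trans_le hu.1
          rw [hF, mul_one_div]
          exact div_le_div_of_nonneg_right ((hwin u hu0 (hu.2.trans hdle)).2.le) hu0.le
        calc (∫ t in c..d, F t) ≤ ∫ t in c..d, η' * (1 / t) := hmono
          _ = η' * Real.log (d / c) := by
            rw [intervalIntegral.integral_const_mul, integral_one_div_of_pos hc hd]
    rcases le_or_gt a 1 with hA | hA
    · have hle : ε * a ≤ ε := by nlinarith
      obtain ⟨hpos, hub⟩ := key (ε * a) ε (by positivity) hle (by nlinarith)
      have hlog : Real.log (ε / (ε * a)) = |Real.log a| := by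
        rw [show ε / (ε * a) = a⁻¹ by field_simp, Real.log_inv,
          abs_of_nonpos (Real.log_nonpos ha.le hA)]
      rw [hlog] at hub
      rw [abs_of_nonneg hpos]
      nlinarith
    · have hle : ε ≤ ε * a := by nlinarith
      obtain ⟨hpos, hub⟩ := key ε (ε * a) hε0 hle (by nlinarith)
      have hlog : Real.log (ε * a / ε) = |Real.log a| := by
        rw [show ε * a / ε = a by rw [mul_comm, mul_div_assoc, div_self hε0.ne', mul_one],
          abs_of_nonneg (Real.log_nonneg hA.le)]
      rw [hlog] at hub
      rw [intervalIntegral.integral_symm, abs_neg, abs_of_nonneg hpos]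
      nlinarith
  have hD : Tendsto (fun ε => ∫ r in ε..N, (g (r * a) - g r) / r) l
      (𝓝 (∫ r in (0 : ℝ)..N, (g (r * a) - g r) / r)) := by
    have hIcc : MeasureTheory.IntegrableOn (fun r => (g (r * a) - g r) / r)
        (uIcc 0 N) MeasureTheory.volume := by
      rw [uIcc_of_le hN.le]
      exact (intervalIntegrable_iff_integrableOn_Icc_of_le hN.le).mp hf
    have hco := intervalIntegral.continuousOn_primitive_interval_left hIcc
    have h0 := (hco 0 left_mem_uIcc)
    refine h0.tendsto.mono_left (nhdsWithin_mono 0 ?_)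
    rw [uIcc_of_le hN.le]
    exact Ioo_subset_Icc_self
  have hT2 : Tendsto (fun ε => ∫ r in ε..N, (g (r * a) - g r) / r) l
      (𝓝 ((∫ t in (N * a)..N, F t) - 0)) := by
    refine Tendsto.congr' ?_ (tendsto_const_nhds.sub hC)
    filter_upwards [self_mem_nhdsWithin] with ε hε
    exact (hB ε hε).symm
  rw [sub_zero] at hT2
  exact tendsto_nhds_unique hD hT2

/-- If `g : [0,∞) → ℝ` is continuous with `g(0) = max_{t≥0} g(t)` and
`∫₀^N (g(0) − g(t))/t dt` exists for all `N > 0`, then for all `N > 0` the integral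
`∫₀^N (g(ra) − g(r))/r dr` is `≥ 0` for `a ∈ [0,1]` and `≤ 0` for `a ∈ [1,∞)`. -/
theorem sign_of_frullani_integral (g : ℝ → ℝ)
    (hcont : ContinuousOn g (Ici 0))
    (hmax : ∀ t ∈ Ici (0 : ℝ), g t ≤ g 0)
    (hint : ∀ N : ℝ, 0 < N → IntervalIntegrable (fun t => (g 0 - g t) / t) volume 0 N)
    (N : ℝ) (hN : 0 < N) (a : ℝ) :
    (a ∈ Icc (0 : ℝ) 1 → 0 ≤ ∫ r in (0 : ℝ)..N, (g (r * a) - g r) / r) ∧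
    (a ∈ Ici (1 : ℝ) → (∫ r in (0 : ℝ)..N, (g (r * a) - g r) / r) ≤ 0) := by
  constructor
  · rintro ⟨ha0, ha1⟩
    rcases eq_or_lt_of_le ha0 with rfl | hapos
    · simp only [mul_zero]
      exact intervalIntegral.integral_nonneg hN.le fun u hu =>
        div_nonneg (sub_nonneg.mpr (hmax u hu.1)) hu.1
    · by_cases hf : IntervalIntegrable (fun r => (g (r * a) - g r) / r)
        MeasureTheory.volume 0 N
      · rw [frullani_key g hcont hmax N hN a hapos hf]
        apply intervalIntegral.integral_nonneg (by nlinarith)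
        intro u hu
        have hu0 : 0 < u := lt_of_lt_of_le (by positivity) hu.1
        exact div_nonneg (sub_nonneg.mpr (hmax u hu0.le)) hu0.le
      · rw [intervalIntegral.integral_undef hf]
  · intro ha
    have ha1 : (1 : ℝ) ≤ a := ha
    have hapos : (0 : ℝ) < a := lt_of_lt_of_le one_pos ha1
    by_cases hf : IntervalIntegrable (fun r => (g (r * a) - g r) / r)
        MeasureTheory.volume 0 N
    · rw [frullani_key g hcont hmax N hN a hapos hf, intervalIntegral.integral_symm]
      refine neg_nonpos.mpr (intervalIntegral.integral_nonneg (by nlinarith) ?_)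
      intro u hu
      have hu0 : 0 < u := lt_of_lt_of_le hN hu.1
      exact div_nonneg (sub_nonneg.mpr (hmax u hu0.le)) hu0.le
    · rw [intervalIntegral.integral_undef hf]
end

section
/- For every n ∈ ℕ and every ξ ∈ ℝⁿ, the Fourier transform of the surface measure σ_{n−1} on the unit sphere 𝕊^{n−1} satisfies σ̂_{n−1}(ξ) = ∫_{𝕊^{n−1}} e^{iξ·x} dσ_{n−1}(x) = ω_{n−1} K_n(|ξ|), where ω_{n−1} = 2π^{n/2}/Γ(n/2) is the surface area of 𝕊^{n−1} and K_n(t) = Σ_{k≥0} (−1)^k (t/2)^{2k} / ((n/2,k) k!). -/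
open MeasureTheory Metric Set
open scoped Real RealInnerProductSpace

/-- The generalized hypergeometric function `K_n`. -/
noncomputable def Kn (n : ℕ) (t : ℝ) : ℝ :=
  ∑' k : ℕ, (-1) ^ k /
      ((Real.Gamma ((n : ℝ) / 2 + k) / Real.Gamma ((n : ℝ) / 2)) * (Nat.factorial k)) *
    (t / 2) ^ (2 * k)

/-- The surface area `ω_{n−1} = 2 π^{n/2} / Γ(n/2)` of the unit sphere in `ℝⁿ`. -/
noncomputable def omegaSphere (n : ℕ) : ℝ :=
  2 * Real.pi ^ ((n : ℝ) / 2) / Real.Gamma ((n : ℝ) / 2)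

section aux

lemma gauss_Ioi (m : ℕ) : ∫ r in Ioi (0:ℝ), r ^ m * Real.exp (-r ^ 2) =
    Real.Gamma ((m + 1) / 2) / 2 := by
  have h := integral_rpow_mul_exp_neg_rpow (p := 2) (q := (m : ℝ)) two_pos
    (lt_of_lt_of_le neg_one_lt_zero (Nat.cast_nonneg m))
  rw [setIntegral_congr_fun measurableSet_Ioi (g := fun r : ℝ => r ^ (m:ℝ) * Real.exp (-r ^ (2:ℝ)))
    (fun x hx => ?_), h, one_div, inv_mul_eq_div]
  rw [← Real.rpow_natCast x m, ← Real.rpow_natCast x 2]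
  norm_num

lemma gauss_even (k : ℕ) : ∫ t : ℝ, t ^ (2 * k) * Real.exp (-t ^ 2) =
    Real.Gamma (k + 1 / 2) := by
  have h : ∀ t : ℝ, t ^ (2 * k) * Real.exp (-t ^ 2) =
      (fun s : ℝ => s ^ (2 * k) * Real.exp (-s ^ 2)) |t| := by
    intro t
    simp only [pow_mul, sq_abs]
  calc ∫ t : ℝ, t ^ (2 * k) * Real.exp (-t ^ 2)
      = ∫ t : ℝ, (fun s : ℝ => s ^ (2 * k) * Real.exp (-s ^ 2)) |t| := by
        exact integral_congr_ae (Filter.Eventually.of_forall h)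
    _ = 2 * ∫ t in Ioi (0:ℝ), t ^ (2 * k) * Real.exp (-t ^ 2) :=
        integral_comp_abs (f := fun s : ℝ => s ^ (2 * k) * Real.exp (-s ^ 2))
    _ = Real.Gamma (k + 1 / 2) := by
        rw [gauss_Ioi]
        rw [mul_div_cancel₀ _ two_ne_zero]
        congr 1
        push_cast
        ring

lemma gauss_odd (k : ℕ) : ∫ t : ℝ, t ^ (2 * k + 1) * Real.exp (-t ^ 2) = 0 := by
  have h : ∫ t : ℝ, t ^ (2 * k + 1) * Real.exp (-t ^ 2) =
      - ∫ t : ℝ, t ^ (2 * k + 1) * Real.exp (-t ^ 2) := by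
    conv_lhs => rw [← integral_neg_eq_self]
    rw [← integral_neg]
    congr 1 with t
    rw [Odd.neg_pow ⟨k, by ring⟩, neg_pow, neg_sq]
    ring_nf
  linarith

lemma Gamma_nat_add_half (k : ℕ) :
    Real.Gamma (k + 1 / 2) = Real.sqrt Real.pi * (2 * k).factorial / (4 ^ k * k.factorial) := by
  induction k with
  | zero => rw [Nat.cast_zero, zero_add, Real.Gamma_one_half_eq]; simp
  | succ k ih =>
      have h : ((k : ℝ) + 1) + 1 / 2 = ((k : ℝ) + 1 / 2) + 1 := by ring
      rw [Nat.cast_add, Nat.cast_one, h, Real.Gamma_add_one (by positivity), ih]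
      have h4 : (4:ℝ) ^ k * (k.factorial : ℝ) ≠ 0 := by positivity
      field_simp
      rw [Nat.mul_succ, Nat.factorial_succ, Nat.factorial_succ, Nat.factorial_succ]
      push_cast
      ring

variable {n : ℕ}

local notation "E" n => EuclideanSpace ℝ (Fin n)

lemma polar_integral (hn : 1 ≤ n) (g : (E n) → ℝ) (F : sphere (0 : E n) 1 → ℝ) (G : ℝ → ℝ)
    (hg : ∀ (θ : sphere (0 : E n) 1) (r : ℝ), 0 < r → g (r • (θ : E n)) = F θ * G r) :
    ∫ x, g x = (∫ θ, F θ ∂(volume : Measure (E n)).toSphere) *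
      ∫ r in Ioi (0 : ℝ), r ^ (n - 1) * G r := by
  haveI : Nontrivial (E n) := by
    refine nontrivial_of_ne (EuclideanSpace.single ⟨0, hn⟩ 1) 0 ?_
    simp [← norm_pos_iff, EuclideanSpace.norm_single]
  have hdim : Module.finrank ℝ (E n) = n := finrank_euclideanSpace_fin
  calc
    ∫ x, g x = ∫ x : ({(0)}ᶜ : Set (E n)), g x ∂((volume : Measure (E n)).comap (↑)) := by
      rw [integral_subtype_comap (measurableSet_singleton _).compl g,
        MeasureTheory.restrict_compl_singleton]
    _ = ∫ p : sphere (0 : E n) 1 × Ioi (0 : ℝ), F p.1 * G p.2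
        ∂((volume : Measure (E n)).toSphere.prod (.volumeIoiPow (Module.finrank ℝ (E n) - 1))) := by
      rw [← (volume : Measure (E n)).measurePreserving_homeomorphUnitSphereProd.integral_comp
        (Homeomorph.measurableEmbedding _) (fun p => F p.1 * G p.2.1)]
      refine integral_congr_ae (Filter.Eventually.of_forall fun x => ?_)
      have hx : x.1 ≠ 0 := x.2
      have := hg ((homeomorphUnitSphereProd (E n) x).1) ‖x.1‖ (norm_pos_iff.2 hx)
      rw [homeomorphUnitSphereProd_apply_fst_coe, smul_inv_smul₀ (norm_ne_zero_iff.2 hx)] at this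
      simp only [homeomorphUnitSphereProd_apply_snd_coe]
      exact this
    _ = (∫ θ, F θ ∂(volume : Measure (E n)).toSphere) *
        ∫ r : Ioi (0:ℝ), G r ∂(Measure.volumeIoiPow (Module.finrank ℝ (E n) - 1)) :=
      integral_prod_mul F (fun r : Ioi (0:ℝ) => G r)
    _ = _ := by
      congr 1
      simp only [Measure.volumeIoiPow, ENNReal.ofReal]
      rw [integral_withDensity_eq_integral_smul
        ((measurable_subtype_coe.pow_const _).real_toNNReal)]
      rw [integral_subtype_comap measurableSet_Ioi
        (fun a : ℝ => Real.toNNReal (a ^ (Module.finrank ℝ (E n) - 1)) • G a)]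
      rw [hdim]
      refine setIntegral_congr_fun measurableSet_Ioi fun x hx => ?_
      rw [NNReal.smul_def, Real.coe_toNNReal _ (pow_nonneg hx.out.le _), smul_eq_mul]

lemma integral_inner_pow_gaussian (hn : 1 ≤ n) (u : E n) (hu : ‖u‖ = 1) (m : ℕ) :
    ∫ x : E n, ⟪u, x⟫ ^ m * Real.exp (-‖x‖ ^ 2) =
      (∫ t : ℝ, t ^ m * Real.exp (-t ^ 2)) * Real.sqrt Real.pi ^ (n - 1) := by
  classical
  set i0 : Fin n := ⟨0, hn⟩ with hi0
  have hcard : Module.finrank ℝ (E n) = Fintype.card (Fin n) := by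
    simp [finrank_euclideanSpace_fin]
  have horth : Orthonormal ℝ (({i0} : Set (Fin n)).restrict (fun _ : Fin n => u)) := by
    constructor
    · intro i; exact hu
    · intro i j hij
      have hi := i.2; have hj := j.2
      simp only [mem_singleton_iff] at hi hj
      exact absurd (Subtype.ext (hi.trans hj.symm)) hij
  obtain ⟨b, hb⟩ := Orthonormal.exists_orthonormalBasis_extension_of_card_eq hcard horth
  have hbu : b i0 = u := hb i0 rfl
  have h1 : ∫ x : E n, ⟪u, x⟫ ^ m * Real.exp (-‖x‖ ^ 2) =
      ∫ y : E n, (y i0) ^ m * Real.exp (-‖y‖ ^ 2) := by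
    rw [← b.measurePreserving_repr_symm.integral_comp
      b.repr.symm.toHomeomorph.measurableEmbedding
      (fun x : E n => ⟪u, x⟫ ^ m * Real.exp (-‖x‖ ^ 2))]
    congr 1 with y
    rw [← hbu, ← OrthonormalBasis.repr_apply_apply, LinearIsometryEquiv.apply_symm_apply,
      LinearIsometryEquiv.norm_map]
  rw [h1]
  have h2 : ∫ y : E n, (y i0) ^ m * Real.exp (-‖y‖ ^ 2) =
      ∫ y : Fin n → ℝ, ∏ i : Fin n,
        ((if i = i0 then (y i) ^ m else 1) * Real.exp (-(y i) ^ 2)) := by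
    rw [← ((EuclideanSpace.volume_preserving_symm_measurableEquiv_toLp (ι := Fin n)).symm).integral_comp'
      (fun y : E n => (y i0) ^ m * Real.exp (-‖y‖ ^ 2))]
    congr 1 with z
    have hcoord : ∀ i, (MeasurableEquiv.toLp 2 (Fin n → ℝ)).symm.symm z i = z i := fun i => rfl
    have hnorm : ‖(MeasurableEquiv.toLp 2 (Fin n → ℝ)).symm.symm z‖ ^ 2 = ∑ i, z i ^ 2 := by
      rw [EuclideanSpace.norm_eq, Real.sq_sqrt (by positivity)]
      simp [hcoord, sq_abs]
    rw [hcoord, hnorm, Finset.prod_mul_distrib, Finset.prod_ite_eq' Finset.univ i0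
      (fun i => z i ^ m), if_pos (Finset.mem_univ _), ← Real.exp_sum]
    simp [Finset.sum_neg_distrib]
  rw [h2, MeasureTheory.volume_pi, MeasureTheory.integral_fintype_prod_eq_prod
    (fun i t => (if i = i0 then t ^ m else 1) * Real.exp (-t ^ 2)) (μ := fun _ => volume)]
  have hval : ∀ i : Fin n, (∫ t : ℝ, (if i = i0 then t ^ m else 1) * Real.exp (-t ^ 2)) =
      if i = i0 then ∫ t : ℝ, t ^ m * Real.exp (-t ^ 2) else Real.sqrt Real.pi := by
    intro i
    by_cases h : i = i0
    · simp [h]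
    · simp only [h, if_false, one_mul]
      simpa using integral_gaussian 1
  simp_rw [hval]
  rw [← Finset.mul_prod_erase Finset.univ _ (Finset.mem_univ i0), if_pos rfl]
  rw [Finset.prod_congr rfl (fun i hi => if_neg (Finset.mem_erase.1 hi).1),
    Finset.prod_const, Finset.card_erase_of_mem (Finset.mem_univ _), Finset.card_univ,
    Fintype.card_fin]

lemma sphere_moment (hn : 1 ≤ n) (ξ : E n) (m : ℕ) :
    ∫ θ : sphere (0 : E n) 1, ⟪ξ, (θ : E n)⟫ ^ m ∂(volume : Measure (E n)).toSphere =
      2 / Real.Gamma (((n : ℝ) + m) / 2) *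
        (‖ξ‖ ^ m * (∫ t : ℝ, t ^ m * Real.exp (-t ^ 2)) * Real.sqrt Real.pi ^ (n - 1)) := by
  have hg : ∀ (θ : sphere (0 : E n) 1) (r : ℝ), 0 < r →
      (fun x : E n => ⟪ξ, x⟫ ^ m * Real.exp (-‖x‖ ^ 2)) (r • (θ : E n)) =
        (⟪ξ, (θ : E n)⟫ ^ m) * (r ^ m * Real.exp (-r ^ 2)) := by
    intro θ r hr
    have hθ : ‖(θ : E n)‖ = 1 := mem_sphere_zero_iff_norm.1 θ.2
    simp only [real_inner_smul_right, norm_smul, Real.norm_eq_abs, abs_of_pos hr, hθ, mul_one,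
      mul_pow]
    ring
  have hp := polar_integral hn (fun x : E n => ⟪ξ, x⟫ ^ m * Real.exp (-‖x‖ ^ 2))
    (fun θ : sphere (0 : E n) 1 => ⟪ξ, (θ : E n)⟫ ^ m)
    (fun r : ℝ => r ^ m * Real.exp (-r ^ 2)) hg
  have hIoi : ∫ r in Ioi (0:ℝ), r ^ (n - 1) * (r ^ m * Real.exp (-r ^ 2)) =
      Real.Gamma (((n : ℝ) + m) / 2) / 2 := by
    rw [setIntegral_congr_fun measurableSet_Ioi
      (g := fun r : ℝ => r ^ (n - 1 + m) * Real.exp (-r ^ 2)) (fun x _ => by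
        show x ^ (n - 1) * (x ^ m * Real.exp (-x ^ 2)) = x ^ (n - 1 + m) * Real.exp (-x ^ 2)
        rw [pow_add]; ring),
      gauss_Ioi]
    congr 2
    have : n - 1 + m + 1 = n + m := by omega
    rw [show ((n - 1 + m : ℕ) : ℝ) + 1 = ((n - 1 + m + 1 : ℕ) : ℝ) by push_cast; ring, this]
    push_cast
    ring
  have hfull : ∫ x : E n, ⟪ξ, x⟫ ^ m * Real.exp (-‖x‖ ^ 2) =
      ‖ξ‖ ^ m * (∫ t : ℝ, t ^ m * Real.exp (-t ^ 2)) * Real.sqrt Real.pi ^ (n - 1) := by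
    rcases eq_or_ne ξ 0 with h0 | h0
    · subst h0
      cases m with
      | zero =>
          have := integral_inner_pow_gaussian hn (EuclideanSpace.single (⟨0, hn⟩ : Fin n) 1)
            (by simp [EuclideanSpace.norm_single]) 0
          simpa using this
      | succ m => simp [zero_pow (Nat.succ_ne_zero m)]
    · set u : E n := ‖ξ‖⁻¹ • ξ with hu_def
      have hu : ‖u‖ = 1 := norm_smul_inv_norm h0
      have hξu : ∀ x : E n, ⟪ξ, x⟫ = ‖ξ‖ * ⟪u, x⟫ := by
        intro x
        rw [hu_def, real_inner_smul_left, ← mul_assoc, mul_inv_cancel₀ (norm_ne_zero_iff.2 h0),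
          one_mul]
      calc ∫ x : E n, ⟪ξ, x⟫ ^ m * Real.exp (-‖x‖ ^ 2)
          = ∫ x : E n, ‖ξ‖ ^ m * (⟪u, x⟫ ^ m * Real.exp (-‖x‖ ^ 2)) := by
            congr 1 with x
            rw [hξu x, mul_pow]
            ring
        _ = ‖ξ‖ ^ m * ∫ x : E n, ⟪u, x⟫ ^ m * Real.exp (-‖x‖ ^ 2) := integral_const_mul _ _
        _ = _ := by rw [integral_inner_pow_gaussian hn u hu m, mul_assoc]
  rw [hfull, hIoi] at hp
  have hΓ : Real.Gamma (((n : ℝ) + m) / 2) ≠ 0 := by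
    have : (0:ℝ) < ((n : ℝ) + m) / 2 := by
      have : (1:ℝ) ≤ (n:ℝ) := by exact_mod_cast hn
      positivity
    exact (Real.Gamma_pos_of_pos this).ne'
  field_simp at hp ⊢
  linarith [hp]

lemma key_term (hn : 1 ≤ n) (j : ℕ) (t : ℝ) :
    ((-1:ℝ)) ^ j / ((2 * j).factorial : ℝ) *
        (2 / Real.Gamma (((n : ℝ) + (2 * j : ℕ)) / 2) *
          (t ^ (2 * j) * Real.Gamma ((j : ℝ) + 1 / 2) * Real.sqrt Real.pi ^ (n - 1))) =
      omegaSphere n * ((-1) ^ j /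
          ((Real.Gamma ((n : ℝ) / 2 + j) / Real.Gamma ((n : ℝ) / 2)) * (Nat.factorial j)) *
        (t / 2) ^ (2 * j)) := by
  have h1 : Real.Gamma (((n : ℝ) + (2 * j : ℕ)) / 2) = Real.Gamma ((n : ℝ) / 2 + j) := by
    congr 1; push_cast; ring
  have hπ : Real.sqrt Real.pi ^ (n - 1) * Real.sqrt Real.pi = Real.pi ^ ((n : ℝ) / 2) := by
    rw [← pow_succ, Nat.sub_add_cancel hn, Real.sqrt_eq_rpow,
      ← Real.rpow_natCast (Real.pi ^ ((1:ℝ)/2)) n, ← Real.rpow_mul Real.pi_nonneg,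
      one_div, inv_mul_eq_div]
  have ht : (t / 2) ^ (2 * j) = t ^ (2 * j) / 4 ^ j := by
    rw [div_pow, show (2:ℝ) ^ (2 * j) = 4 ^ j from by rw [pow_mul]; norm_num]
  have hΓn : Real.Gamma ((n : ℝ) / 2) ≠ 0 := by
    have h1n : (0:ℝ) < (n:ℝ) / 2 := by
      have : (1:ℝ) ≤ (n:ℝ) := by exact_mod_cast hn
      linarith
    exact (Real.Gamma_pos_of_pos h1n).ne'
  have hΓnj : Real.Gamma ((n : ℝ) / 2 + j) ≠ 0 := by
    have h1n : (0:ℝ) < (n:ℝ) / 2 + j := by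
      have : (1:ℝ) ≤ (n:ℝ) := by exact_mod_cast hn
      positivity
    exact (Real.Gamma_pos_of_pos h1n).ne'
  rw [h1, Gamma_nat_add_half, ht, omegaSphere, ← hπ]
  have hfac2 : ((2 * j).factorial : ℝ) ≠ 0 := by positivity
  have hfac : ((j).factorial : ℝ) ≠ 0 := by positivity
  have h4 : (4:ℝ) ^ j ≠ 0 := by positivity
  set_option maxHeartbeats 1000000 in
  field_simp

end aux

set_option maxHeartbeats 1000000 in
/-- The Fourier transform of the surface measure `σ_{n−1}` of the unit sphere
`𝕊^{n−1} ⊂ ℝⁿ` satisfies `σ̂_{n−1}(ξ) = ω_{n−1} K_n(|ξ|)`. -/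
theorem fourierTransform_sphere_surface_measure
    (n : ℕ) (hn : 1 ≤ n) (ξ : EuclideanSpace ℝ (Fin n)) :
    (∫ x : sphere (0 : EuclideanSpace ℝ (Fin n)) 1,
        Complex.exp (Complex.I * (⟪ξ, (x : EuclideanSpace ℝ (Fin n))⟫ : ℝ))
        ∂((volume : Measure (EuclideanSpace ℝ (Fin n))).toSphere)) =
      (omegaSphere n : ℂ) * (Kn n ‖ξ‖ : ℝ) := by
  classical
  set σ := (volume : Measure (EuclideanSpace ℝ (Fin n))).toSphere with hσ
  set c : sphere (0 : EuclideanSpace ℝ (Fin n)) 1 → ℝ :=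
    fun θ => ⟪ξ, (θ : EuclideanSpace ℝ (Fin n))⟫ with hc
  set F : ℕ → sphere (0 : EuclideanSpace ℝ (Fin n)) 1 → ℂ :=
    fun k θ => (Complex.I * (c θ : ℂ)) ^ k / (k.factorial : ℂ) with hF
  have hcont : ∀ k, Continuous (F k) := by
    intro k
    apply Continuous.div_const
    apply Continuous.pow
    exact continuous_const.mul (Complex.continuous_ofReal.comp
      ((continuous_const.inner continuous_subtype_val)))
  have hbound : ∀ k θ, ‖F k θ‖ ≤ ‖ξ‖ ^ k / (k.factorial : ℝ) := by
    intro k θ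
    have hθ : ‖(θ : EuclideanSpace ℝ (Fin n))‖ = 1 := mem_sphere_zero_iff_norm.1 θ.2
    have h1 : ‖Complex.I * (c θ : ℂ)‖ ≤ ‖ξ‖ := by
      rw [norm_mul, Complex.norm_I, one_mul, Complex.norm_real, Real.norm_eq_abs]
      calc |c θ| ≤ ‖ξ‖ * ‖(θ : EuclideanSpace ℝ (Fin n))‖ := abs_real_inner_le_norm _ _
        _ = ‖ξ‖ := by rw [hθ, mul_one]
    rw [hF]
    simp only [norm_div, norm_pow, Complex.norm_natCast]
    gcongr
  have hint : ∀ k, Integrable (F k) σ := by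
    intro k
    refine (integrable_const (‖ξ‖ ^ k / (k.factorial : ℝ))).mono'
      ((hcont k).aestronglyMeasurable) ?_
    exact Filter.Eventually.of_forall (hbound k)
  have hsum : Summable fun k => ∫ θ, ‖F k θ‖ ∂σ := by
    refine Summable.of_nonneg_of_le (fun k => integral_nonneg fun θ => norm_nonneg _)
      (fun k => ?_) ((Real.summable_pow_div_factorial ‖ξ‖).mul_right (σ univ).toReal)
    calc ∫ θ, ‖F k θ‖ ∂σ ≤ ∫ _θ, ‖ξ‖ ^ k / (k.factorial : ℝ) ∂σ :=
          integral_mono (hint k).norm (integrable_const _) (hbound k)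
      _ = ‖ξ‖ ^ k / (k.factorial : ℝ) * (σ univ).toReal := by
          rw [integral_const, smul_eq_mul, mul_comm, measureReal_def]
  have hexp : ∀ θ : sphere (0 : EuclideanSpace ℝ (Fin n)) 1,
      Complex.exp (Complex.I * (c θ : ℂ)) = ∑' k : ℕ, F k θ := by
    intro θ
    rw [Complex.exp_eq_exp_ℂ, NormedSpace.exp_eq_tsum_div]
  have hswap : (∫ θ, Complex.exp (Complex.I * (c θ : ℂ)) ∂σ) = ∑' k, ∫ θ, F k θ ∂σ := by
    rw [integral_congr_ae (Filter.Eventually.of_forall hexp)]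
    exact (integral_tsum_of_summable_integral_norm hint hsum).symm
  -- value of each term
  have hterm : ∀ k, ∫ θ, F k θ ∂σ = Complex.I ^ k / (k.factorial : ℂ) *
      ((∫ θ, c θ ^ k ∂σ : ℝ) : ℂ) := by
    intro k
    have hre : ((∫ θ, c θ ^ k ∂σ : ℝ) : ℂ) = ∫ θ, ((c θ ^ k : ℝ) : ℂ) ∂σ :=
      (integral_ofReal (𝕜 := ℂ)).symm
    rw [hre, ← integral_const_mul]
    congr 1 with θ
    rw [hF]
    push_cast
    ring
  have hodd : ∀ j : ℕ, ∫ θ, F (2 * j + 1) θ ∂σ = 0 := by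
    intro j
    rw [hterm, sphere_moment hn ξ (2 * j + 1), gauss_odd]
    simp
  have heven : ∀ j : ℕ, ∫ θ, F (2 * j) θ ∂σ =
      ((omegaSphere n * ((-1) ^ j /
          ((Real.Gamma ((n : ℝ) / 2 + j) / Real.Gamma ((n : ℝ) / 2)) * (Nat.factorial j)) *
        (‖ξ‖ / 2) ^ (2 * j)) : ℝ) : ℂ) := by
    intro j
    rw [hterm, sphere_moment hn ξ (2 * j), gauss_even, ← key_term hn j ‖ξ‖]
    have hI : Complex.I ^ (2 * j) = ((-1 : ℝ) ^ j : ℂ) := by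
      rw [pow_mul, Complex.I_sq]
      push_cast
      ring
    rw [hI]
    push_cast
    ring
  -- summability of the terms
  have hsum' : Summable fun k => ∫ θ, F k θ ∂σ :=
    hsum.of_norm_bounded fun k => norm_integral_le_integral_norm _
  have hsume : Summable fun j => ∫ θ, F (2 * j) θ ∂σ :=
    hsum'.comp_injective fun a b hab => by omega
  have hsumo : Summable fun j => ∫ θ, F (2 * j + 1) θ ∂σ :=
    hsum'.comp_injective fun a b hab => by omega
  have hsplit := tsum_even_add_odd (f := fun k => ∫ θ, F k θ ∂σ) hsume hsumo
  rw [hswap, ← hsplit]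
  have hzero : ∑' j : ℕ, ∫ θ, F (2 * j + 1) θ ∂σ = 0 := by
    rw [tsum_congr hodd]
    exact tsum_zero
  rw [hzero, add_zero, tsum_congr heven]
  rw [Kn, Complex.ofReal_tsum, ← tsum_mul_left]
  congr 1 with j
  push_cast
  ring
end
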